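/- arXiv:2001.05256 — 2 statements merged into one kernel-verified Lean document; each statement's English description precedes it below -/
import Mathlib

section
/- In the construction above, each added edge v w_D is a bridge of H, and deleting the edge v w_D from H disconnects exactly the vertex set of the component D from v; in particular the component of H \ (v w_D) not containing v has exactly |D| vertices. -/
/-- In the construction joining `v` to a vertex `w D` of each component `D ≠ C`
(where `C` is the component of `v`), each added edge `s(v, w D)` is a bridge of `H`,
and the component of `H \ s(v, w D)` not containing `v` is exactly `D`. -/
theorem added_edges_are_bridges {V : Type*} [Fintype V] (G : SimpleGraph V)
    (v : V) (w : G.ConnectedComponent → V) (hw : ∀ D, w D ∈ D.supp)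
    (H : SimpleGraph V)
    (hH : H = G ⊔ SimpleGraph.fromEdgeSet
        {e | ∃ D : G.ConnectedComponent, D ≠ G.connectedComponentMk v ∧
          e = s(v, w D)}) :
    ∀ D : G.ConnectedComponent, D ≠ G.connectedComponentMk v →
      H.IsBridge s(v, w D) ∧
      {x : V | ¬ (H.deleteEdges {s(v, w D)}).Reachable v x} = D.supp := by
  intro D hD
  have hwk : ∀ E : G.ConnectedComponent, G.connectedComponentMk (w E) = E := fun E =>
    (SimpleGraph.ConnectedComponent.mem_supp_iff E (w E)).mp (hw E)
  set C := G.connectedComponentMk v with hC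
  set H' := H.deleteEdges {s(v, w D)} with hH'
  -- identify H' with the sdiff form used in IsBridge
  have hsd : H \ SimpleGraph.fromEdgeSet {s(v, w D)} = H' := by
    ext a b
    simp only [SimpleGraph.sdiff_adj, SimpleGraph.fromEdgeSet_adj, hH',
      SimpleGraph.deleteEdges_adj, Set.mem_singleton_iff]
    constructor
    · rintro ⟨h1, h2⟩
      exact ⟨h1, fun he => h2 ⟨he, h1.ne⟩⟩
    · rintro ⟨h1, h2⟩
      exact ⟨h1, fun he => h2 he.1⟩
  -- v is not G-adjacent to w D
  have hvwD : G.connectedComponentMk (w D) = D := hwk D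
  have hnadj : ¬ G.Adj v (w D) := fun h => hD (by
    rw [← hvwD, SimpleGraph.ConnectedComponent.eq]
    exact h.symm.reachable)
  have hvne : v ≠ w D := fun h => hD (by rw [← hvwD, ← h])
  -- key: H'-edges don't cross the boundary of D.supp
  have edgekey : ∀ a b : V, H'.Adj a b →
      (G.connectedComponentMk a = D ↔ G.connectedComponentMk b = D) := by
    intro a b hab
    rw [hH', SimpleGraph.deleteEdges_adj, Set.mem_singleton_iff] at hab
    obtain ⟨hab, hne⟩ := hab
    rw [hH, SimpleGraph.sup_adj, SimpleGraph.fromEdgeSet_adj] at hab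
    rcases hab with h | ⟨⟨E, hE, he⟩, _⟩
    · rw [SimpleGraph.ConnectedComponent.eq.mpr h.reachable]
    · have hED : E ≠ D := by
        rintro rfl; exact hne he
      have hcases := Sym2.eq_iff.mp he
      have hca : G.connectedComponentMk a ≠ D ∧ G.connectedComponentMk b ≠ D := by
        rcases hcases with ⟨rfl, rfl⟩ | ⟨rfl, rfl⟩
        · exact ⟨fun h => hD h.symm, fun h => hED ((hwk E).symm.trans h)⟩
        · exact ⟨fun h => hED ((hwk E).symm.trans h), fun h => hD h.symm⟩
      simp [hca.1, hca.2]
  -- no H'-path from outside D.supp to inside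
  have key : ∀ a b : V, H'.Reachable a b → G.connectedComponentMk a ≠ D →
      G.connectedComponentMk b ≠ D := by
    intro a b hr
    obtain ⟨p⟩ := hr
    induction p with
    | nil => exact id
    | cons h p ih => exact fun ha => ih (fun h' => ha ((edgekey _ _ h).mpr h'))
  -- G ≤ H'
  have hGle : G ≤ H' := by
    intro a b hab
    rw [hH', SimpleGraph.deleteEdges_adj, Set.mem_singleton_iff]
    refine ⟨by rw [hH]; exact Or.inl hab, fun he => ?_⟩
    rcases Sym2.eq_iff.mp he with ⟨rfl, rfl⟩ | ⟨rfl, rfl⟩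
    · exact hnadj hab
    · exact hnadj hab.symm
  -- reachability from v to everything outside D.supp
  have reach : ∀ x : V, G.connectedComponentMk x ≠ D → H'.Reachable v x := by
    intro x hx
    by_cases hxC : G.connectedComponentMk x = C
    · exact (SimpleGraph.ConnectedComponent.exact (hC.symm.trans hxC.symm)).mono hGle
    · set E := G.connectedComponentMk x with hE
      have hEC : E ≠ C := hxC
      have hED : E ≠ D := hx
      have hadj : H'.Adj v (w E) := by
        rw [hH', SimpleGraph.deleteEdges_adj, Set.mem_singleton_iff]
        constructor
        · rw [hH, SimpleGraph.sup_adj, SimpleGraph.fromEdgeSet_adj]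
          exact Or.inr ⟨⟨E, hEC, rfl⟩, fun h => hEC (by rw [← hwk E, ← h])⟩
        · intro he
          rcases Sym2.eq_iff.mp he with ⟨_, h2⟩ | ⟨_, h2⟩
          · exact hED (by rw [← hwk E, h2, hvwD])
          · exact hEC (by rw [← hwk E, h2])
      have : G.Reachable (w E) x :=
        SimpleGraph.ConnectedComponent.exact ((hwk E).trans hE)
      exact hadj.reachable.trans (this.mono hGle)
  have hvD : G.connectedComponentMk v ≠ D := fun h => hD h.symm
  have hset : {x : V | ¬ H'.Reachable v x} = D.supp := by
    ext x
    simp only [Set.mem_setOf_eq, SimpleGraph.ConnectedComponent.mem_supp_iff]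
    constructor
    · intro hnr
      by_contra hx
      exact hnr (reach x hx)
    · intro hx hr
      exact key v x hr hvD hx
  refine ⟨?_, hset⟩
  rw [SimpleGraph.isBridge_iff]
  intro hr
  exact key v (w D) hr hvD hvwD
end

section
/- If A is a bridge-addable class of graphs, C the class of connected graphs in A, and R_n a uniformly random unlabelled n-vertex graph from A (with Ã_n nonempty), then the probability that R_n is connected is at least 1/(2n). -/
/-- Two graphs (in a class) are related iff they are isomorphic. -/
def graphSetoid (n : ℕ) (A : SimpleGraph (Fin n) → Prop) :
    Setoid {G : SimpleGraph (Fin n) // A G} where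
  r G H := Nonempty (G.1 ≃g H.1)
  iseqv := ⟨fun G => ⟨RelIso.refl _⟩, fun ⟨φ⟩ => ⟨φ.symm⟩,
    fun ⟨φ⟩ ⟨ψ⟩ => ⟨φ.trans ψ⟩⟩

/-- The number of unlabelled `n`-vertex graphs in the class `A`. -/
noncomputable def unlabelledCount (n : ℕ) (A : SimpleGraph (Fin n) → Prop) : ℕ :=
  Nat.card (Quotient (graphSetoid n A))

/-- Two vertex-rooted graphs are related iff there is an isomorphism mapping
root to root. -/
def rootedSetoid (n : ℕ) (C : SimpleGraph (Fin n) → Prop) :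
    Setoid {p : SimpleGraph (Fin n) × Fin n // C p.1} where
  r p q := ∃ φ : p.1.1 ≃g q.1.1, φ p.1.2 = q.1.2
  iseqv := ⟨fun p => ⟨RelIso.refl _, rfl⟩,
    fun {p q} ⟨φ, h⟩ => ⟨φ.symm, by simp [← h]⟩,
    fun {p q r} ⟨φ, h⟩ ⟨ψ, h'⟩ => ⟨φ.trans ψ, by simp [h, h']⟩⟩

/-- The number of unlabelled vertex-rooted `n`-vertex graphs in the class `C`. -/
noncomputable def rootedCount (n : ℕ) (C : SimpleGraph (Fin n) → Prop) : ℕ :=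
  Nat.card (Quotient (rootedSetoid n C))

/-- A class of graphs is bridge-addable if adding an edge between two vertices in
distinct components of a member yields a member. -/
def BridgeAddable (n : ℕ) (A : SimpleGraph (Fin n) → Prop) : Prop :=
  ∀ G, A G → ∀ u v : Fin n, ¬ G.Reachable u v →
    A (G ⊔ SimpleGraph.fromEdgeSet {s(u, v)})

/-- A class of graphs is closed under isomorphism. -/
def IsoClosed (n : ℕ) (A : SimpleGraph (Fin n) → Prop) : Prop :=
  ∀ G H : SimpleGraph (Fin n), Nonempty (G ≃g H) → A G → A H

namespace BAProof

open SimpleGraph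

variable {n : ℕ}

/-! ### Generic reachability lemmas -/

lemma reach_closed {G : SimpleGraph (Fin n)} {P : Fin n → Prop}
    (hP : ∀ a b, G.Adj a b → P a → P b) :
    ∀ {x y : Fin n}, G.Reachable x y → P x → P y := by
  intro x y h hx
  obtain ⟨w⟩ := h
  induction w with
  | nil => exact hx
  | cons hadj p ih => exact ih (hP _ _ hadj hx)

lemma reach_transfer {G1 G2 : SimpleGraph (Fin n)} {v : Fin n}
    (hAdj : ∀ a b, G1.Adj a b → a ≠ v → b ≠ v → G2.Adj a b) :
    ∀ {x y : Fin n}, ¬ G1.Reachable x v → G1.Reachable x y → G2.Reachable x y := by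
  intro x y hxv h
  obtain ⟨w⟩ := h
  induction w with
  | nil => exact Reachable.refl _
  | @cons a b c hadj p ih =>
    have hbv : ¬ G1.Reachable b v := fun hr => hxv (hadj.reachable.trans hr)
    have ha : a ≠ v := by rintro rfl; exact hxv (Reachable.refl _)
    have hb : b ≠ v := by rintro rfl; exact hxv hadj.reachable
    exact ((hAdj _ _ hadj ha hb).reachable).trans (ih hbv)

/-! ### Star edge sets and deletions -/

def starSet (r : Fin n) (W : Finset (Fin n)) : Set (Sym2 (Fin n)) :=
  {e | ∃ v ∈ W, e = s(r, v)}

lemma mem_starSet {r a b : Fin n} {W : Finset (Fin n)} :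
    s(a, b) ∈ starSet r W ↔ ∃ v ∈ W, (a = r ∧ b = v) ∨ (a = v ∧ b = r) := by
  constructor
  · rintro ⟨v, hv, h⟩
    exact ⟨v, hv, Sym2.eq_iff.mp h⟩
  · rintro ⟨v, hv, h⟩
    exact ⟨v, hv, Sym2.eq_iff.mpr h⟩

lemma starSet_not_mem {r a b : Fin n} {W : Finset (Fin n)}
    (ha : a ≠ r) (hb : b ≠ r) : s(a, b) ∉ starSet r W := by
  rw [mem_starSet]
  rintro ⟨v, hv, ⟨rfl, rfl⟩ | ⟨rfl, rfl⟩⟩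
  · exact ha rfl
  · exact hb rfl

lemma starSet_insert (r a : Fin n) (W : Finset (Fin n)) :
    starSet r (insert a W) = starSet r W ∪ {s(r, a)} := by
  ext e
  simp only [starSet, Set.mem_setOf_eq, Finset.mem_insert, Set.mem_union,
    Set.mem_singleton_iff]
  constructor
  · rintro ⟨v, rfl | hv, rfl⟩
    · exact Or.inr rfl
    · exact Or.inl ⟨v, hv, rfl⟩
  · rintro (⟨v, hv, rfl⟩ | rfl)
    · exact ⟨v, Or.inr hv, rfl⟩
    · exact ⟨a, Or.inl rfl, rfl⟩

lemma starSet_empty (r : Fin n) : starSet r (∅ : Finset (Fin n)) = ∅ := by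
  ext e; simp [starSet]

def delStar (H : SimpleGraph (Fin n)) (r : Fin n) (W : Finset (Fin n)) :
    SimpleGraph (Fin n) :=
  H.deleteEdges (starSet r W)

lemma delStar_adj {H : SimpleGraph (Fin n)} {r a b : Fin n} {W : Finset (Fin n)} :
    (delStar H r W).Adj a b ↔ H.Adj a b ∧ s(a, b) ∉ starSet r W := by
  simp [delStar]

lemma delStar_le {H : SimpleGraph (Fin n)} {r : Fin n} {W : Finset (Fin n)} :
    delStar H r W ≤ H := by
  intro a b hab
  exact (delStar_adj.mp hab).1

lemma delStar_mono {H : SimpleGraph (Fin n)} {r : Fin n} {W W' : Finset (Fin n)}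
    (h : W ⊆ W') : delStar H r W' ≤ delStar H r W := by
  intro a b hab
  rw [delStar_adj] at hab ⊢
  refine ⟨hab.1, fun hm => hab.2 ?_⟩
  obtain ⟨v, hv, he⟩ := hm
  exact ⟨v, h hv, he⟩

lemma delStar_adj_of_ne {H : SimpleGraph (Fin n)} {r a b : Fin n} {W : Finset (Fin n)}
    (h : H.Adj a b) (ha : a ≠ r) (hb : b ≠ r) : (delStar H r W).Adj a b :=
  delStar_adj.mpr ⟨h, starSet_not_mem ha hb⟩

lemma adj_delStar_of_not_mem {H : SimpleGraph (Fin n)} {r v : Fin n} {W : Finset (Fin n)}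
    (h : H.Adj r v) (hv : v ∉ W) : (delStar H r W).Adj r v := by
  refine delStar_adj.mpr ⟨h, ?_⟩
  rw [mem_starSet]
  rintro ⟨u, hu, ⟨-, rfl⟩ | ⟨rfl, h2⟩⟩
  · exact hv hu
  · exact h.ne h2.symm

def Hdel (H : SimpleGraph (Fin n)) (v : Fin n) : SimpleGraph (Fin n) :=
  H.deleteEdges {e | v ∈ e}

lemma Hdel_adj {H : SimpleGraph (Fin n)} {v a b : Fin n} :
    (Hdel H v).Adj a b ↔ H.Adj a b ∧ a ≠ v ∧ b ≠ v := by
  simp only [Hdel, deleteEdges_adj, Set.mem_setOf_eq, Sym2.mem_iff]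
  constructor
  · rintro ⟨h, h2⟩
    push_neg at h2
    exact ⟨h, Ne.symm h2.1, Ne.symm h2.2⟩
  · rintro ⟨h, h1, h2⟩
    refine ⟨h, ?_⟩
    push_neg
    exact ⟨h1.symm, h2.symm⟩

/-! ### Components and sizes -/

def Cset (G : SimpleGraph (Fin n)) (x : Fin n) : Set (Fin n) := {y | G.Reachable x y}

noncomputable def cs (G : SimpleGraph (Fin n)) (x : Fin n) : ℕ := (Cset G x).ncard

lemma mem_Cset {G : SimpleGraph (Fin n)} {x y : Fin n} :
    y ∈ Cset G x ↔ G.Reachable x y := Iff.rfl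

lemma cset_disjoint {G : SimpleGraph (Fin n)} {x y : Fin n}
    (h : ¬ G.Reachable x y) : Disjoint (Cset G x) (Cset G y) := by
  rw [Set.disjoint_left]
  intro z hz hz'
  exact h (hz.trans hz'.symm)

lemma cs_add_le {G : SimpleGraph (Fin n)} {x y : Fin n}
    (h : ¬ G.Reachable x y) : cs G x + cs G y ≤ n := by
  have hd := cset_disjoint h
  have h1 : (Cset G x ∪ Cset G y).ncard = cs G x + cs G y :=
    Set.ncard_union_eq hd (Set.toFinite _) (Set.toFinite _)
  have h2 : (Cset G x ∪ Cset G y).ncard ≤ (Set.univ : Set (Fin n)).ncard :=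
    Set.ncard_le_ncard (Set.subset_univ _) (Set.toFinite _)
  have h3 : (Set.univ : Set (Fin n)).ncard = n := by
    rw [Set.ncard_univ]; simp
  omega

/-! ### Valid decompositions -/

structure Valid (H : SimpleGraph (Fin n)) (r : Fin n) (W : Finset (Fin n)) : Prop where
  nonempty : W.Nonempty
  adj : ∀ v ∈ W, H.Adj r v
  sep : ∀ v ∈ W, ¬ (delStar H r W).Reachable r v
  pair : ∀ v ∈ W, ∀ w ∈ W, v ≠ w → ¬ (delStar H r W).Reachable v w
  cover : ∀ x, (delStar H r W).Reachable r x ∨ ∃ v ∈ W, (delStar H r W).Reachable v x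
  min : ∀ v ∈ W, cs (delStar H r W) r ≤ cs (delStar H r W) v

lemma Valid.two_cs_le {H : SimpleGraph (Fin n)} {r : Fin n} {W : Finset (Fin n)}
    (h : Valid H r W) : 2 * cs (delStar H r W) r ≤ n := by
  obtain ⟨v, hv⟩ := h.nonempty
  have h1 := cs_add_le (h.sep v hv)
  have h2 := h.min v hv
  omega

/-- key chain step -/
lemma chain_step {H : SimpleGraph (Fin n)} {r : Fin n} {W1 W2 : Finset (Fin n)}
    (h1 : Valid H r W1) (h2 : Valid H r W2) {v : Fin n}
    (hv1 : v ∈ W1) (hv2 : v ∉ W2) :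
    cs (delStar H r W1) r + 1 ≤ cs (delStar H r W2) r := by
  have hsub : insert r (Cset (delStar H r W1) v) ⊆ Cset (delStar H r W2) r := by
    intro x hx
    rcases Set.mem_insert_iff.mp hx with rfl | hx
    · exact Reachable.refl _
    · have hre : (delStar H r W1).Reachable v x := hx
      have htr : (delStar H r W2).Reachable v x := by
        refine reach_transfer (v := r) ?_ ?_ hre
        · intro a b hab ha hb
          exact delStar_adj_of_ne ((delStar_adj.mp hab).1) ha hb
        · intro hr
          exact h1.sep v hv1 hr.symm
      have hadj : (delStar H r W2).Adj r v := adj_delStar_of_not_mem (h1.adj v hv1) hv2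
      exact hadj.reachable.trans htr
  have hrn : r ∉ Cset (delStar H r W1) v := fun hr => h1.sep v hv1 (Reachable.symm hr)
  have hcard : (insert r (Cset (delStar H r W1) v)).ncard
      = (Cset (delStar H r W1) v).ncard + 1 :=
    Set.ncard_insert_of_notMem hrn (Set.toFinite _)
  have hle : (insert r (Cset (delStar H r W1) v)).ncard
      ≤ (Cset (delStar H r W2) r).ncard :=
    Set.ncard_le_ncard hsub (Set.toFinite _)
  have hmin := h1.min v hv1
  have e1 : cs (delStar H r W1) v = (Cset (delStar H r W1) v).ncard := rfl
  have e2 : cs (delStar H r W1) r = (Cset (delStar H r W1) r).ncard := rfl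
  have e3 : cs (delStar H r W2) r = (Cset (delStar H r W2) r).ncard := rfl
  omega

lemma valid_chain {H : SimpleGraph (Fin n)} {r : Fin n} {W1 W2 : Finset (Fin n)}
    (h1 : Valid H r W1) (h2 : Valid H r W2) : W1 ⊆ W2 ∨ W2 ⊆ W1 := by
  by_contra hc
  push_neg at hc
  obtain ⟨hn1, hn2⟩ := hc
  obtain ⟨v, hv1, hv2⟩ := Finset.not_subset.mp hn1
  obtain ⟨w, hw2, hw1⟩ := Finset.not_subset.mp hn2
  have := chain_step h1 h2 hv1 hv2
  have := chain_step h2 h1 hw2 hw1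
  omega

/-! ### Claims -/

structure IsClaim (H : SimpleGraph (Fin n)) (r : Fin n) (S S' : Finset (Fin n))
    (v : Fin n) : Prop where
  v1 : Valid H r S
  v2 : Valid H r S'
  ss : S ⊂ S'
  mem : v ∈ S'
  nmem : v ∉ S

def Tset (H : SimpleGraph (Fin n)) (r : Fin n) (S' : Finset (Fin n)) (v : Fin n) :
    Set (Fin n) :=
  Cset (delStar H r S') v

section ClaimFacts

variable {H : SimpleGraph (Fin n)} {r : Fin n} {S S' : Finset (Fin n)} {v : Fin n}

lemma IsClaim.vmem (hc : IsClaim H r S S' v) : v ∈ Tset H r S' v := Reachable.refl _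

lemma IsClaim.rnmem (hc : IsClaim H r S S' v) : r ∉ Tset H r S' v :=
  fun h => hc.v2.sep v hc.mem (Reachable.symm h)

lemma IsClaim.radj (hc : IsClaim H r S S' v) : H.Adj r v := hc.v2.adj v hc.mem

lemma IsClaim.sub (hc : IsClaim H r S S' v) :
    Tset H r S' v ⊆ Cset (delStar H r S) r := by
  intro x hx
  have h1 : (delStar H r S).Reachable v x :=
    Reachable.mono (delStar_mono hc.ss.subset) hx
  have h2 : (delStar H r S).Adj r v := adj_delStar_of_not_mem hc.radj hc.nmem
  exact h2.reachable.trans h1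

lemma IsClaim.small (hc : IsClaim H r S S' v) :
    2 * (Tset H r S' v).ncard + 2 ≤ n := by
  have hsub : insert r (Tset H r S' v) ⊆ Cset (delStar H r S) r := by
    intro x hx
    rcases Set.mem_insert_iff.mp hx with rfl | hx
    · exact Reachable.refl _
    · exact hc.sub hx
  have hcard : (insert r (Tset H r S' v)).ncard = (Tset H r S' v).ncard + 1 :=
    Set.ncard_insert_of_notMem hc.rnmem (Set.toFinite _)
  have hle : (insert r (Tset H r S' v)).ncard ≤ cs (delStar H r S) r :=
    Set.ncard_le_ncard hsub (Set.toFinite _)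
  have h2 := hc.v1.two_cs_le
  omega

lemma IsClaim.boundary (hc : IsClaim H r S S' v) {a b : Fin n}
    (hab : H.Adj a b) (ha : a ∈ Tset H r S' v) (hb : b ∉ Tset H r S' v) :
    a = v ∧ b = r := by
  by_cases hm : s(a, b) ∈ starSet r S'
  · rw [mem_starSet] at hm
    obtain ⟨u, hu, ⟨rfl, rfl⟩ | ⟨rfl, rfl⟩⟩ := hm
    · exact absurd ha hc.rnmem
    · constructor
      · by_contra hne
        exact hc.v2.pair v hc.mem a hu (fun h => hne h.symm) ha
      · rfl
  · have : (delStar H r S').Adj a b := delStar_adj.mpr ⟨hab, hm⟩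
    exact absurd (Reachable.trans ha this.reachable) hb

lemma IsClaim.out_of_Hdel (hc : IsClaim H r S S' v) {x : Fin n}
    (h : (Hdel H v).Reachable r x) : x ∉ Tset H r S' v := by
  refine reach_closed (P := fun y => y ∉ Tset H r S' v) ?_ h hc.rnmem
  intro a b hab hanT hbT
  rw [Hdel_adj] at hab
  obtain ⟨h1, h2, h3⟩ := hab
  have := hc.boundary h1.symm hbT hanT
  exact h3 this.1

lemma IsClaim.cover_Hdel (hc : IsClaim H r S S' v) {x : Fin n}
    (h : x ∉ Tset H r S' v) : (Hdel H v).Reachable r x := by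
  rcases hc.v2.cover x with hx | ⟨w, hw, hwx⟩
  · refine reach_transfer (v := v) ?_ (hc.v2.sep v hc.mem) hx
    intro a b hab ha hb
    exact Hdel_adj.mpr ⟨(delStar_adj.mp hab).1, ha, hb⟩
  · by_cases hwv : w = v
    · subst hwv; exact absurd hwx h
    · have hnr : ¬ (delStar H r S').Reachable w v :=
        hc.v2.pair w hw v hc.mem hwv
      have h1 : (Hdel H v).Reachable w x := by
        refine reach_transfer (v := v) ?_ hnr hwx
        intro a b hab ha hb
        exact Hdel_adj.mpr ⟨(delStar_adj.mp hab).1, ha, hb⟩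
      have h2 : (Hdel H v).Adj r w :=
        Hdel_adj.mpr ⟨hc.v2.adj w hw, hc.radj.ne, hwv⟩
      exact h2.reachable.trans h1

end ClaimFacts

lemma cover_contra {T T' : Set (Fin n)}
    (h1 : 2 * T.ncard + 2 ≤ n) (h2 : 2 * T'.ncard + 2 ≤ n)
    (hcov : ∀ x, x ∈ T ∨ x ∈ T') : False := by
  have hsub : (Set.univ : Set (Fin n)) ⊆ T ∪ T' := fun x _ => hcov x
  have hu : (Set.univ : Set (Fin n)).ncard = n := by rw [Set.ncard_univ]; simp
  have hle : (Set.univ : Set (Fin n)).ncard ≤ (T ∪ T').ncard :=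
    Set.ncard_le_ncard hsub (Set.toFinite _)
  have := Set.ncard_union_le T T'
  omega

lemma Hdel_le_delStar {H : SimpleGraph (Fin n)} {v : Fin n} {U : Finset (Fin n)} :
    Hdel H v ≤ delStar H v U := by
  intro a b hab
  rw [Hdel_adj] at hab
  exact delStar_adj.mpr ⟨hab.1, starSet_not_mem hab.2.1 hab.2.2⟩

lemma cross1 {H : SimpleGraph (Fin n)} {r v : Fin n} {S S' U U' : Finset (Fin n)}
    (hc1 : IsClaim H r S S' v) (hc2 : IsClaim H v U U' r) : False := by
  refine cover_contra hc1.small hc2.small (fun x => ?_)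
  by_cases hx : x ∈ Tset H r S' v
  · exact Or.inl hx
  · right
    have h1 : (Hdel H v).Reachable r x := hc1.cover_Hdel hx
    exact Reachable.mono Hdel_le_delStar h1
    
lemma cross2 {H : SimpleGraph (Fin n)} {r r' v : Fin n} {S S' U U' : Finset (Fin n)}
    (hc1 : IsClaim H r S S' v) (hc2 : IsClaim H r' U U' v) (hrr : r ≠ r') : False := by
  have hr'T : r' ∈ Tset H r S' v := by
    by_contra hcon
    have := hc1.boundary hc2.radj.symm hc1.vmem hcon
    exact hrr this.2.symm
  have hrT' : r ∈ Tset H r' U' v := by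
    by_contra hcon
    have := hc2.boundary hc1.radj.symm hc2.vmem hcon
    exact hrr this.2
  refine cover_contra hc1.small hc2.small (fun x => ?_)
  by_cases hx : x ∈ Tset H r S' v
  · exact Or.inl hx
  · right
    have h1 : (Hdel H v).Reachable r x := hc1.cover_Hdel hx
    have hnr : ¬ (Hdel H v).Reachable r r' :=
      fun h => (hc1.out_of_Hdel h) hr'T
    have h2 : (delStar H r' U').Reachable r x := by
      refine reach_transfer (v := r') ?_ hnr h1
      intro a b hab ha hb
      exact delStar_adj.mpr ⟨(Hdel_adj.mp hab).1, starSet_not_mem ha hb⟩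
    exact hrT'.trans h2

def EPClaimed (H : SimpleGraph (Fin n)) (v : Fin n) : Prop :=
  ∃ r S S', IsClaim H r S S' v

lemma exists_unclaimed {H : SimpleGraph (Fin n)}
    (hcl : ∃ v, EPClaimed H v) : ∃ x, ¬ EPClaimed H x := by
  classical
  set CS : Set (Fin n × Finset (Fin n) × Finset (Fin n) × Fin n) :=
    {c | IsClaim H c.1 c.2.1 c.2.2.1 c.2.2.2} with hCS
  have hne : CS.Nonempty := by
    obtain ⟨v, r, Sa, Sb, hc⟩ := hcl
    exact ⟨(r, Sa, Sb, v), hc⟩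
  obtain ⟨c, hcmem, hcmax⟩ :=
    Set.Finite.exists_maximalFor
      (fun c => (Tset H c.1 c.2.2.1 c.2.2.2).ncard) CS (Set.toFinite _) hne
  have hmax : ∀ c' ∈ CS, (Tset H c'.1 c'.2.2.1 c'.2.2.2).ncard ≤
      (Tset H c.1 c.2.2.1 c.2.2.2).ncard := by
    intro c' hc'
    rcases le_total ((Tset H c'.1 c'.2.2.1 c'.2.2.2).ncard)
      ((Tset H c.1 c.2.2.1 c.2.2.2).ncard) with h | h
    · exact h
    · exact hcmax hc' h
  obtain ⟨r, Sa, Sb, v⟩ := c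
  have hc : IsClaim H r Sa Sb v := hcmem
  refine ⟨r, ?_⟩
  rintro ⟨ρ, U, U', hc'⟩
  by_cases hρ : ρ = v
  · subst hρ
    exact cross1 hc hc'
  · -- maximality contradiction
    have hρT : ρ ∉ Tset H r Sb v := by
      intro hρT
      have := hc.boundary hc'.radj hρT hc.rnmem
      exact hρ this.1
    have hsub : insert r (Tset H r Sb v) ⊆ Tset H ρ U' r := by
      intro x hx
      rcases Set.mem_insert_iff.mp hx with rfl | hx
      · exact Reachable.refl _
      · have h1 : (delStar H ρ U').Reachable v x := by
          refine reach_transfer (v := ρ) ?_ (fun h => hρT h) hx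
          intro a b hab ha hb
          exact delStar_adj.mpr ⟨(delStar_adj.mp hab).1, starSet_not_mem ha hb⟩
        have h2 : (delStar H ρ U').Adj r v := by
          refine delStar_adj.mpr ⟨hc.radj, starSet_not_mem ?_ ?_⟩
          · exact hc'.radj.ne'
          · exact Ne.symm hρ
        have hvr : (delStar H ρ U').Reachable r v := h2.reachable
        exact Reachable.symm (Reachable.symm (hvr.trans h1))
    have hcard : (insert r (Tset H r Sb v)).ncard = (Tset H r Sb v).ncard + 1 :=
      Set.ncard_insert_of_notMem hc.rnmem (Set.toFinite _)
    have hle : (insert r (Tset H r Sb v)).ncard ≤ (Tset H ρ U' r).ncard :=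
      Set.ncard_le_ncard hsub (Set.toFinite _)
    have := hmax (ρ, U, U', r) hc'
    simp only at this
    omega

/-! ### Successors of non-maximal valid pairs -/

lemma exists_succ {H : SimpleGraph (Fin n)} {r : Fin n} {S : Finset (Fin n)}
    (h : ∃ S', Valid H r S' ∧ S ⊂ S') :
    ∃ S', (Valid H r S' ∧ S ⊂ S') ∧
      ∀ S'', Valid H r S'' → S ⊂ S'' → S'.card ≤ S''.card := by
  classical
  obtain ⟨T, hT, hTmin⟩ :=
    Set.Finite.exists_minimalFor (fun X : Finset (Fin n) => X.card)
      {S' | Valid H r S' ∧ S ⊂ S'} (Set.toFinite _) h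
  refine ⟨T, hT, fun S'' h1 h2 => ?_⟩
  rcases le_total T.card S''.card with h3 | h3
  · exact h3
  · exact hTmin (j := S'') ⟨h1, h2⟩ h3

noncomputable def succS (H : SimpleGraph (Fin n)) (r : Fin n) (S : Finset (Fin n)) :
    Finset (Fin n) := by
  classical
  exact if h : ∃ S', (Valid H r S' ∧ S ⊂ S') ∧
      ∀ S'', Valid H r S'' → S ⊂ S'' → S'.card ≤ S''.card
    then h.choose else ∅

lemma succS_spec {H : SimpleGraph (Fin n)} {r : Fin n} {S : Finset (Fin n)}
    (h : ∃ S', Valid H r S' ∧ S ⊂ S') :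
    (Valid H r (succS H r S) ∧ S ⊂ succS H r S) ∧
      ∀ S'', Valid H r S'' → S ⊂ S'' → (succS H r S).card ≤ S''.card := by
  classical
  have hex := exists_succ h
  rw [succS]
  split
  · next h' => exact h'.choose_spec
  · next h' => exact absurd hex h'

lemma succS_sdiff_nonempty {H : SimpleGraph (Fin n)} {r : Fin n} {S : Finset (Fin n)}
    (h : ∃ S', Valid H r S' ∧ S ⊂ S') : (succS H r S \ S).Nonempty := by
  classical
  rw [Finset.sdiff_nonempty]
  exact ((succS_spec h).1.2).not_subset

noncomputable def claimVert (H : SimpleGraph (Fin n)) (r : Fin n) (S : Finset (Fin n))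
    (hn : 0 < n) : Fin n := by
  classical
  exact if h : (succS H r S \ S).Nonempty then (succS H r S \ S).min' h else ⟨0, hn⟩

lemma claimVert_isClaim {H : SimpleGraph (Fin n)} {r : Fin n} {S : Finset (Fin n)}
    (hV : Valid H r S) (h : ∃ S', Valid H r S' ∧ S ⊂ S') (hn : 0 < n) :
    IsClaim H r S (succS H r S) (claimVert H r S hn) := by
  classical
  have hne := succS_sdiff_nonempty h
  have hv : claimVert H r S hn ∈ succS H r S \ S := by
    rw [claimVert, dif_pos hne]
    exact Finset.min'_mem _ hne
  rw [Finset.mem_sdiff] at hv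
  exact ⟨hV, (succS_spec h).1.1, (succS_spec h).1.2, hv.1, hv.2⟩

lemma claimVert_ne {H : SimpleGraph (Fin n)} {r : Fin n} {Sp Sq : Finset (Fin n)}
    (hp : Valid H r Sp) (hq : Valid H r Sq) (hpq : Sp ⊂ Sq)
    (hnp : ∃ S', Valid H r S' ∧ Sp ⊂ S') (hnq : ∃ S', Valid H r S' ∧ Sq ⊂ S')
    (hn : 0 < n) : claimVert H r Sp hn ≠ claimVert H r Sq hn := by
  classical
  have hcp := claimVert_isClaim hp hnp hn
  have hcq := claimVert_isClaim hq hnq hn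
  have hsub : succS H r Sp ⊆ Sq := by
    rcases valid_chain hcp.v2 hq with h | h
    · exact h
    · rcases eq_or_ne Sq (succS H r Sp) with heq | hne
      · rw [heq]
      · have h1 : Sq ⊂ succS H r Sp := ⟨h, fun hcon =>
          hne (Finset.Subset.antisymm h hcon)⟩
        have h2 := (succS_spec hnp).2 Sq hq hpq
        have h3 := Finset.card_lt_card h1
        omega
  have h1 : claimVert H r Sp hn ∈ Sq := hsub hcp.mem
  have h2 : claimVert H r Sq hn ∉ Sq := hcq.nmem
  intro hcon
  rw [hcon] at h1
  exact h2 h1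

/-! ### The counting lemma : at most 2n-1 valid pairs -/

open Classical in
noncomputable def vInj (H : SimpleGraph (Fin n)) (hn : 0 < n) (x0 : Fin n)
    (hx0 : ¬ EPClaimed H x0)
    (p : {p : Fin n × Finset (Fin n) // Valid H p.1 p.2}) :
    Fin n ⊕ {x : Fin n // x ≠ x0} :=
  if h : ∃ S', Valid H p.1.1 S' ∧ p.1.2 ⊂ S' then
    Sum.inr ⟨claimVert H p.1.1 p.1.2 hn, fun hcon => hx0 (hcon ▸
      ⟨p.1.1, p.1.2, succS H p.1.1 p.1.2, claimVert_isClaim p.2 h hn⟩)⟩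
  else Sum.inl p.1.1

lemma vInj_inj (H : SimpleGraph (Fin n)) (hn : 0 < n) (x0 : Fin n)
    (hx0 : ¬ EPClaimed H x0) : Function.Injective (vInj H hn x0 hx0) := by
  rintro ⟨⟨r1, S1⟩, hv1⟩ ⟨⟨r2, S2⟩, hv2⟩ h
  unfold vInj at h
  by_cases h1 : ∃ S', Valid H r1 S' ∧ S1 ⊂ S' <;>
    by_cases h2 : ∃ S', Valid H r2 S' ∧ S2 ⊂ S'
  · rw [dif_pos h1, dif_pos h2] at h
    simp only [Sum.inr.injEq, Subtype.mk.injEq] at h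
    have hveq : claimVert H r1 S1 hn = claimVert H r2 S2 hn := h
    by_cases hr : r1 = r2
    · subst hr
      by_cases hS : S1 = S2
      · subst hS; rfl
      · exfalso
        rcases valid_chain hv1 hv2 with hsub | hsub
        · exact claimVert_ne hv1 hv2 ⟨hsub, fun hcon => hS
            (Finset.Subset.antisymm hsub hcon)⟩ h1 h2 hn hveq
        · exact claimVert_ne hv2 hv1 ⟨hsub, fun hcon => hS
            (Finset.Subset.antisymm hcon hsub)⟩ h2 h1 hn hveq.symm
    · exfalso
      have hc1 := claimVert_isClaim hv1 h1 hn
      have hc2 := claimVert_isClaim hv2 h2 hn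
      rw [hveq] at hc1
      exact cross2 hc1 hc2 hr
  · rw [dif_pos h1, dif_neg h2] at h
    cases h
  · rw [dif_neg h1, dif_pos h2] at h
    cases h
  · rw [dif_neg h1, dif_neg h2] at h
    simp only [Sum.inl.injEq] at h
    subst h
    by_cases hS : S1 = S2
    · subst hS; rfl
    · exfalso
      rcases valid_chain hv1 hv2 with hsub | hsub
      · exact h1 ⟨S2, hv2, ⟨hsub, fun hcon => hS
          (Finset.Subset.antisymm hsub hcon)⟩⟩
      · exact h2 ⟨S1, hv1, ⟨hsub, fun hcon => hS
          (Finset.Subset.antisymm hcon hsub)⟩⟩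

lemma card_valid_le (hn : 0 < n) (H : SimpleGraph (Fin n)) :
    Nat.card {p : Fin n × Finset (Fin n) // Valid H p.1 p.2} ≤ 2 * n - 1 := by
  classical
  by_cases hcl : ∃ v, EPClaimed H v
  · obtain ⟨x0, hx0⟩ := exists_unclaimed hcl
    have hcard := Nat.card_le_card_of_injective _ (vInj_inj H hn x0 hx0)
    have hc1 : Nat.card (Fin n ⊕ {x : Fin n // x ≠ x0}) = n + (n - 1) := by
      rw [Nat.card_sum]
      congr 1
      · simp
      · rw [Nat.card_eq_fintype_card]
        have : Fintype.card {x : Fin n // x ≠ x0} =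
            Fintype.card (Fin n) - Fintype.card {x : Fin n // x = x0} :=
          Fintype.card_subtype_compl _
        rw [this, Fintype.card_subtype_eq, Fintype.card_fin]
    omega
  · have hinj : Function.Injective
        (fun p : {p : Fin n × Finset (Fin n) // Valid H p.1 p.2} => p.1.1) := by
      rintro ⟨⟨r1, S1⟩, hv1⟩ ⟨⟨r2, S2⟩, hv2⟩ h
      simp only at h
      subst h
      by_cases hS : S1 = S2
      · subst hS; rfl
      · exfalso
        apply hcl
        rcases valid_chain hv1 hv2 with hsub | hsub
        · have hss : S1 ⊂ S2 := ⟨hsub, fun hcon => hS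
            (Finset.Subset.antisymm hsub hcon)⟩
          obtain ⟨x, hx2, hx1⟩ := Finset.exists_of_ssubset hss
          exact ⟨x, r1, S1, S2, hv1, hv2, hss, hx2, hx1⟩
        · have hss : S2 ⊂ S1 := ⟨hsub, fun hcon => hS
            (Finset.Subset.antisymm hcon hsub)⟩
          obtain ⟨x, hx2, hx1⟩ := Finset.exists_of_ssubset hss
          exact ⟨x, r1, S2, S1, hv2, hv1, hss, hx2, hx1⟩
    have hcard := Nat.card_le_card_of_injective _ hinj
    have hfn : Nat.card (Fin n) = n := by simp
    omega


/-! ### Connecting a disconnected graph within the class -/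

lemma sup_star_reach {G : SimpleGraph (Fin n)} {r : Fin n} {W : Finset (Fin n)} {x : Fin n}
    (h : (G ⊔ fromEdgeSet (starSet r W)).Reachable r x) :
    G.Reachable r x ∨ ∃ v ∈ W, G.Reachable v x := by
  refine reach_closed (P := fun y => G.Reachable r y ∨ ∃ v ∈ W, G.Reachable v y)
    ?_ h (Or.inl (Reachable.refl _))
  intro a b hab hPa
  rw [sup_adj] at hab
  rcases hab with hab | hab
  · rcases hPa with h1 | ⟨v, hv, h1⟩
    · exact Or.inl (h1.trans hab.reachable)
    · exact Or.inr ⟨v, hv, h1.trans hab.reachable⟩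
  · rw [fromEdgeSet_adj] at hab
    obtain ⟨hm, hne⟩ := hab
    rw [mem_starSet] at hm
    obtain ⟨u, hu, h' | h'⟩ := hm
    · refine Or.inr ⟨u, hu, ?_⟩
      rw [h'.2]
    · refine Or.inl ?_
      rw [h'.2]


lemma mem_A_sup_star {A : SimpleGraph (Fin n) → Prop} (hba : BridgeAddable n A)
    {G : SimpleGraph (Fin n)} (hG : A G) (r : Fin n) :
    ∀ W : Finset (Fin n), (∀ v ∈ W, ¬ G.Reachable r v) →
      (∀ v ∈ W, ∀ w ∈ W, v ≠ w → ¬ G.Reachable v w) →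
      A (G ⊔ SimpleGraph.fromEdgeSet (starSet r W)) := by
  intro W
  induction W using Finset.induction_on with
  | empty =>
    intro _ _
    rw [starSet_empty, fromEdgeSet_empty, sup_bot_eq]
    exact hG
  | @insert a W ha ih =>
    intro hW1 hW2
    have hG' := ih (fun v hv => hW1 v (Finset.mem_insert_of_mem hv))
      (fun v hv w hw hne => hW2 v (Finset.mem_insert_of_mem hv) w
        (Finset.mem_insert_of_mem hw) hne)
    have hna : ¬ (G ⊔ fromEdgeSet (starSet r W)).Reachable r a := by
      intro hre
      rcases sup_star_reach hre with h1 | ⟨v, hv, h1⟩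
      · exact hW1 a (Finset.mem_insert_self a W) h1
      · exact hW2 v (Finset.mem_insert_of_mem hv) a (Finset.mem_insert_self a W)
          (fun hcon => ha (hcon ▸ hv)) h1
    have hstep := hba _ hG' r a hna
    have heq : (G ⊔ fromEdgeSet (starSet r W)) ⊔ fromEdgeSet {s(r, a)}
        = G ⊔ fromEdgeSet (starSet r (insert a W)) := by
      rw [starSet_insert, fromEdgeSet_union, sup_assoc]
    rwa [heq] at hstep

lemma encode {A : SimpleGraph (Fin n) → Prop} (hba : BridgeAddable n A) (hn : 0 < n)
    {G : SimpleGraph (Fin n)} (hG : A G) (hdisc : ¬ G.Connected) :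
    ∃ p : SimpleGraph (Fin n) × Fin n × Finset (Fin n),
      (A p.1 ∧ p.1.Connected) ∧ Valid p.1 p.2.1 p.2.2 ∧ delStar p.1 p.2.1 p.2.2 = G := by
  classical
  obtain ⟨r, -, hrmin⟩ := Finset.exists_min_image Finset.univ (cs G)
    ⟨⟨0, hn⟩, Finset.mem_univ _⟩
  have hrep_reach : ∀ x : Fin n, G.Reachable ((G.connectedComponentMk x).out) x := by
    intro x
    have h1 : G.connectedComponentMk ((G.connectedComponentMk x).out)
        = G.connectedComponentMk x := (G.connectedComponentMk x).out_eq
    exact (SimpleGraph.ConnectedComponent.eq).mp h1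
  have hrep_eq : ∀ x y : Fin n, G.Reachable x y →
      (G.connectedComponentMk x).out = (G.connectedComponentMk y).out := by
    intro x y hxy
    have : G.connectedComponentMk x = G.connectedComponentMk y :=
      (SimpleGraph.ConnectedComponent.eq).mpr hxy
    rw [this]
  set W : Finset (Fin n) := Set.Finite.toFinset (Set.toFinite
    {v | (G.connectedComponentMk v).out = v ∧ ¬ G.Reachable r v}) with hWdef
  have hWmem : ∀ v, v ∈ W ↔ ((G.connectedComponentMk v).out = v ∧ ¬ G.Reachable r v) := by
    intro v
    rw [hWdef, Set.Finite.mem_toFinset]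
    rfl
  have hW1 : ∀ v ∈ W, ¬ G.Reachable r v := fun v hv => ((hWmem v).mp hv).2
  have hW2 : ∀ v ∈ W, ∀ w ∈ W, v ≠ w → ¬ G.Reachable v w := by
    intro v hv w hw hne hre
    have h1 := ((hWmem v).mp hv).1
    have h2 := ((hWmem w).mp hw).1
    apply hne
    rw [← h1, ← h2]
    exact hrep_eq v w hre
  have hW3 : ∀ x, ¬ G.Reachable r x → ∃ v ∈ W, G.Reachable v x := by
    intro x hx
    refine ⟨(G.connectedComponentMk x).out, ?_, hrep_reach x⟩
    rw [hWmem]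
    refine ⟨?_, fun hcon => hx (hcon.trans (hrep_reach x))⟩
    exact hrep_eq _ _ (hrep_reach x)
  have hWne : W.Nonempty := by
    have hpre : ¬ G.Preconnected := by
      intro hp
      exact hdisc ((connected_iff G).mpr ⟨hp, ⟨⟨0, hn⟩⟩⟩)
    rw [SimpleGraph.Preconnected] at hpre
    push_neg at hpre
    obtain ⟨a, b, hab⟩ := hpre
    have hor : ¬ G.Reachable r a ∨ ¬ G.Reachable r b := by
      by_contra hcon
      push_neg at hcon
      exact hab (hcon.1.symm.trans hcon.2)
    rcases hor with h | h
    · obtain ⟨v, hv, -⟩ := hW3 a h; exact ⟨v, hv⟩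
    · obtain ⟨v, hv, -⟩ := hW3 b h; exact ⟨v, hv⟩
  have hAH : A (G ⊔ fromEdgeSet (starSet r W)) := mem_A_sup_star hba hG r W hW1 hW2
  have hHadj : ∀ v ∈ W, (G ⊔ fromEdgeSet (starSet r W)).Adj r v := by
    intro v hv
    have hne : r ≠ v := fun hcon => (hW1 v hv) (hcon ▸ Reachable.refl r)
    have hadj : (fromEdgeSet (starSet r W)).Adj r v :=
      (fromEdgeSet_adj _).mpr ⟨⟨v, hv, rfl⟩, hne⟩
    exact (sup_adj _ _ _ _).mpr (Or.inr hadj)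
  have hdel : delStar (G ⊔ fromEdgeSet (starSet r W)) r W = G := by
    ext a b
    simp only [delStar_adj, sup_adj, fromEdgeSet_adj]
    constructor
    · rintro ⟨h1 | ⟨hm, hne⟩, h2⟩
      · exact h1
      · exact absurd hm h2
    · intro h1
      refine ⟨Or.inl h1, ?_⟩
      rw [mem_starSet]
      rintro ⟨v, hv, h' | h'⟩
      · exact hW1 v hv (h'.2 ▸ h'.1 ▸ h1.reachable)
      · exact hW1 v hv (h'.1 ▸ h'.2 ▸ h1.symm.reachable)
  have hconn : (G ⊔ fromEdgeSet (starSet r W)).Connected := by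
    rw [connected_iff]
    refine ⟨?_, ⟨⟨0, hn⟩⟩⟩
    have hkey : ∀ x, (G ⊔ fromEdgeSet (starSet r W)).Reachable r x := by
      intro x
      by_cases hx : G.Reachable r x
      · exact hx.mono le_sup_left
      · obtain ⟨v, hv, hvx⟩ := hW3 x hx
        exact (hHadj v hv).reachable.trans (hvx.mono le_sup_left)
    intro a b
    exact (hkey a).symm.trans (hkey b)
  refine ⟨(G ⊔ fromEdgeSet (starSet r W), r, W), ⟨hAH, hconn⟩, ?_, hdel⟩
  refine ⟨hWne, hHadj, ?_, ?_, ?_, ?_⟩ <;> rw [hdel]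
  · exact hW1
  · exact hW2
  · intro x
    by_cases hx : G.Reachable r x
    · exact Or.inl hx
    · exact Or.inr (hW3 x hx)
  · intro v _
    exact hrmin v (Finset.mem_univ v)

/-! ### Isomorphism invariance -/

lemma iso_reach {G G' : SimpleGraph (Fin n)} (φ : G ≃g G') (x y : Fin n) :
    G.Reachable x y ↔ G'.Reachable (φ x) (φ y) := by
  constructor
  · intro h
    exact h.map φ.toEmbedding.toHom
  · intro h
    have h2 := h.map φ.symm.toEmbedding.toHom
    simpa using h2

lemma iso_connected {G G' : SimpleGraph (Fin n)} (φ : G ≃g G') (h : G.Connected) :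
    G'.Connected := by
  rw [connected_iff] at h ⊢
  refine ⟨?_, h.2⟩
  intro a b
  have h1 := h.1 (φ.symm a) (φ.symm b)
  have h2 := (iso_reach φ _ _).mp h1
  simpa using h2

lemma mem_starSet_image {H H' : SimpleGraph (Fin n)} (φ : H ≃g H') (r a b : Fin n)
    (W : Finset (Fin n)) :
    s(φ a, φ b) ∈ starSet (φ r) (W.image ⇑φ) ↔ s(a, b) ∈ starSet r W := by
  rw [mem_starSet, mem_starSet]
  constructor
  · rintro ⟨v', hv', h⟩
    obtain ⟨v, hv, rfl⟩ := Finset.mem_image.mp hv'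
    refine ⟨v, hv, ?_⟩
    rcases h with ⟨h1, h2⟩ | ⟨h1, h2⟩
    · exact Or.inl ⟨φ.injective h1, φ.injective h2⟩
    · exact Or.inr ⟨φ.injective h1, φ.injective h2⟩
  · rintro ⟨v, hv, h⟩
    refine ⟨φ v, Finset.mem_image_of_mem _ hv, ?_⟩
    rcases h with ⟨rfl, rfl⟩ | ⟨rfl, rfl⟩
    · exact Or.inl ⟨rfl, rfl⟩
    · exact Or.inr ⟨rfl, rfl⟩

def isoDelStar {H H' : SimpleGraph (Fin n)} (φ : H ≃g H') (r : Fin n)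
    (W : Finset (Fin n)) :
    delStar H r W ≃g delStar H' (φ r) (W.image ⇑φ) where
  toEquiv := φ.toEquiv
  map_rel_iff' := by
    intro a b
    show (delStar H' (φ r) (W.image ⇑φ)).Adj (φ a) (φ b) ↔ (delStar H r W).Adj a b
    rw [delStar_adj, delStar_adj, mem_starSet_image φ, φ.map_adj_iff]

lemma cs_iso {G G' : SimpleGraph (Fin n)} (ψ : G ≃g G') (x : Fin n) :
    cs G' (ψ x) = cs G x := by
  have himg : Cset G' (ψ x) = ⇑ψ '' Cset G x := by
    ext y
    constructor
    · intro hy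
      refine ⟨ψ.symm y, ?_, by simp⟩
      rw [mem_Cset, iso_reach ψ]
      simpa using (mem_Cset.mp hy)
    · rintro ⟨z, hz, rfl⟩
      exact (iso_reach ψ x z).mp hz
  rw [cs, cs, himg, Set.ncard_image_of_injective _ ψ.injective]

lemma iso_valid {H H' : SimpleGraph (Fin n)} (φ : H ≃g H') {r : Fin n}
    {W : Finset (Fin n)} (h : Valid H r W) : Valid H' (φ r) (W.image ⇑φ) := by
  have hreach : ∀ x y : Fin n, (delStar H r W).Reachable x y ↔
      (delStar H' (φ r) (W.image ⇑φ)).Reachable (φ x) (φ y) :=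
    fun x y => iso_reach (isoDelStar φ r W) x y
  refine ⟨h.nonempty.image _, ?_, ?_, ?_, ?_, ?_⟩
  · rintro v' hv'
    obtain ⟨v, hv, rfl⟩ := Finset.mem_image.mp hv'
    exact φ.map_adj_iff.mpr (h.adj v hv)
  · rintro v' hv'
    obtain ⟨v, hv, rfl⟩ := Finset.mem_image.mp hv'
    intro hre
    exact h.sep v hv ((hreach r v).mpr hre)
  · rintro v' hv' w' hw' hne hre
    obtain ⟨v, hv, rfl⟩ := Finset.mem_image.mp hv'
    obtain ⟨w, hw, rfl⟩ := Finset.mem_image.mp hw'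
    exact h.pair v hv w hw (fun hcon => hne (by rw [hcon])) ((hreach v w).mpr hre)
  · intro x'
    obtain ⟨x, rfl⟩ : ∃ x, φ x = x' := ⟨φ.symm x', by simp⟩
    rcases h.cover x with h1 | ⟨v, hv, h1⟩
    · exact Or.inl ((hreach r x).mp h1)
    · exact Or.inr ⟨φ v, Finset.mem_image_of_mem _ hv, (hreach v x).mp h1⟩
  · rintro v' hv'
    obtain ⟨v, hv, rfl⟩ := Finset.mem_image.mp hv'
    have e1 : cs (delStar H' (φ r) (W.image ⇑φ)) (φ r) = cs (delStar H r W) r :=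
      cs_iso (isoDelStar φ r W) r
    have e2 : cs (delStar H' (φ r) (W.image ⇑φ)) (φ v) = cs (delStar H r W) v :=
      cs_iso (isoDelStar φ r W) v
    rw [e1, e2]
    exact h.min v hv

/-! ### Assembly -/

open Classical in
noncomputable def splitMap (A : SimpleGraph (Fin n) → Prop) :
    Quotient (graphSetoid n A) →
      Quotient (graphSetoid n (fun G => A G ∧ G.Connected)) ⊕
      Quotient (graphSetoid n (fun G => A G ∧ ¬ G.Connected)) :=
  Quotient.lift
    (fun x : {G : SimpleGraph (Fin n) // A G} =>
      if h : x.1.Connected then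
        Sum.inl (Quotient.mk (graphSetoid n (fun G => A G ∧ G.Connected)) ⟨x.1, x.2, h⟩)
      else
        Sum.inr (Quotient.mk (graphSetoid n (fun G => A G ∧ ¬ G.Connected)) ⟨x.1, x.2, h⟩))
    (by
      rintro x y ⟨φ⟩
      by_cases hx : x.1.Connected
      · have hy : y.1.Connected := iso_connected φ hx
        rw [dif_pos hx, dif_pos hy]
        exact congrArg _ (Quotient.sound ⟨φ⟩)
      · have hy : ¬ y.1.Connected := fun hcon => hx (iso_connected φ.symm hcon)
        rw [dif_neg hx, dif_neg hy]
        exact congrArg _ (Quotient.sound ⟨φ⟩))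

lemma splitMap_inj (A : SimpleGraph (Fin n) → Prop) :
    Function.Injective (splitMap A) := by
  intro q1 q2
  refine Quotient.ind₂ (motive := fun q1 q2 => splitMap A q1 = splitMap A q2 → q1 = q2)
    ?_ q1 q2
  intro x y h
  simp only [splitMap, Quotient.lift_mk] at h
  by_cases hx : x.1.Connected <;> by_cases hy : y.1.Connected
  · rw [dif_pos hx, dif_pos hy] at h
    obtain ⟨φ⟩ := Quotient.exact (Sum.inl.inj h)
    exact Quotient.sound ⟨φ⟩
  · rw [dif_pos hx, dif_neg hy] at h
    cases h
  · rw [dif_neg hx, dif_pos hy] at h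
    cases h
  · rw [dif_neg hx, dif_neg hy] at h
    obtain ⟨φ⟩ := Quotient.exact (Sum.inr.inj h)
    exact Quotient.sound ⟨φ⟩

lemma count_split (A : SimpleGraph (Fin n) → Prop) :
    unlabelledCount n A ≤
      unlabelledCount n (fun G => A G ∧ G.Connected) +
      unlabelledCount n (fun G => A G ∧ ¬ G.Connected) := by
  have h := Nat.card_le_card_of_injective _ (splitMap_inj A)
  rwa [Nat.card_sum] at h

noncomputable def psiFull (A : SimpleGraph (Fin n) → Prop) (hba : BridgeAddable n A)
    (hn : 0 < n)
    (d : Quotient (graphSetoid n (fun G => A G ∧ ¬ G.Connected))) :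
    {t : Σ c : Quotient (graphSetoid n (fun G => A G ∧ G.Connected)),
        {p : Fin n × Finset (Fin n) // Valid c.out.1 p.1 p.2} //
      Nonempty ((delStar t.1.out.1 t.2.1.1 t.2.1.2) ≃g d.out.1)} := by
  classical
  have hE := encode hba hn d.out.2.1 d.out.2.2
  obtain ⟨⟨hAH, hconn⟩, hval, hdel⟩ := hE.choose_spec
  let c : Quotient (graphSetoid n (fun G => A G ∧ G.Connected)) :=
    Quotient.mk _ ⟨hE.choose.1, hAH, hconn⟩
  have hrel : Nonempty (c.out.1 ≃g hE.choose.1) :=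
    @Quotient.mk_out _ (graphSetoid n (fun G => A G ∧ G.Connected)) ⟨hE.choose.1, hAH, hconn⟩
  let φ : hE.choose.1 ≃g c.out.1 := (Classical.choice hrel).symm
  refine ⟨⟨c, ⟨(φ hE.choose.2.1, hE.choose.2.2.image ⇑φ), iso_valid φ hval⟩⟩, ?_⟩
  have hiso := (isoDelStar φ hE.choose.2.1 hE.choose.2.2).symm
  rw [hdel] at hiso
  exact ⟨hiso⟩

lemma psi_inj (A : SimpleGraph (Fin n) → Prop) (hba : BridgeAddable n A) (hn : 0 < n) :
    Function.Injective (fun d => (psiFull A hba hn d).1) := by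
  intro d1 d2 h
  replace h : (psiFull A hba hn d1).1 = (psiFull A hba hn d2).1 := h
  obtain ⟨ψ1⟩ := (psiFull A hba hn d1).2
  obtain ⟨ψ2⟩ := (psiFull A hba hn d2).2
  rw [h] at ψ1
  have hrel : Nonempty (d1.out.1 ≃g d2.out.1) := ⟨ψ1.symm.trans ψ2⟩
  have hQ : Quotient.mk (graphSetoid n (fun G => A G ∧ ¬ G.Connected)) d1.out
      = Quotient.mk _ d2.out := Quotient.sound hrel
  rwa [Quotient.out_eq, Quotient.out_eq] at hQ

lemma count_D_le (A : SimpleGraph (Fin n) → Prop) (hba : BridgeAddable n A)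
    (hn : 0 < n) :
    unlabelledCount n (fun G => A G ∧ ¬ G.Connected) ≤
      (2 * n - 1) * unlabelledCount n (fun G => A G ∧ G.Connected) := by
  classical
  have h1 := Nat.card_le_card_of_injective _ (psi_inj A hba hn)
  letI : Fintype (Quotient (graphSetoid n (fun G => A G ∧ G.Connected))) :=
    Fintype.ofFinite _
  letI : ∀ c : Quotient (graphSetoid n (fun G => A G ∧ G.Connected)),
      Fintype {p : Fin n × Finset (Fin n) // Valid c.out.1 p.1 p.2} :=
    fun c => Fintype.ofFinite _
  have h2 : Nat.card (Σ c : Quotient (graphSetoid n (fun G => A G ∧ G.Connected)),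
      {p : Fin n × Finset (Fin n) // Valid c.out.1 p.1 p.2}) =
      ∑ c : Quotient (graphSetoid n (fun G => A G ∧ G.Connected)),
        Fintype.card {p : Fin n × Finset (Fin n) // Valid c.out.1 p.1 p.2} := by
    rw [Nat.card_eq_fintype_card, Fintype.card_sigma]
  have h3 : ∀ c : Quotient (graphSetoid n (fun G => A G ∧ G.Connected)),
      Fintype.card {p : Fin n × Finset (Fin n) // Valid c.out.1 p.1 p.2} ≤ 2 * n - 1 := by
    intro c
    rw [← Nat.card_eq_fintype_card]
    exact card_valid_le hn _
  have h4 : ∑ c : Quotient (graphSetoid n (fun G => A G ∧ G.Connected)),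
      Fintype.card {p : Fin n × Finset (Fin n) // Valid c.out.1 p.1 p.2} ≤
      Fintype.card (Quotient (graphSetoid n (fun G => A G ∧ G.Connected))) * (2 * n - 1) := by
    have h := Finset.sum_le_card_nsmul Finset.univ
      (fun c => Fintype.card {p : Fin n × Finset (Fin n) // Valid c.out.1 p.1 p.2})
      (2 * n - 1) (fun c _ => h3 c)
    rw [smul_eq_mul] at h
    exact h
  have h5 : unlabelledCount n (fun G => A G ∧ G.Connected)
      = Fintype.card (Quotient (graphSetoid n (fun G => A G ∧ G.Connected))) := by
    rw [unlabelledCount, Nat.card_eq_fintype_card]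
  rw [unlabelledCount]
  calc Nat.card (Quotient (graphSetoid n (fun G => A G ∧ ¬ G.Connected)))
      ≤ Nat.card (Σ c : Quotient (graphSetoid n (fun G => A G ∧ G.Connected)),
        {p : Fin n × Finset (Fin n) // Valid c.out.1 p.1 p.2}) := h1
    _ = ∑ c : Quotient (graphSetoid n (fun G => A G ∧ G.Connected)),
        Fintype.card {p : Fin n × Finset (Fin n) // Valid c.out.1 p.1 p.2} := h2
    _ ≤ Fintype.card (Quotient (graphSetoid n (fun G => A G ∧ G.Connected)))
        * (2 * n - 1) := h4
    _ = (2 * n - 1) * unlabelledCount n (fun G => A G ∧ G.Connected) := by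
        rw [h5, mul_comm]

lemma connected_exists {A : SimpleGraph (Fin n) → Prop} (hba : BridgeAddable n A)
    (hn : 0 < n) (hne : ∃ G, A G) : ∃ G, A G ∧ G.Connected := by
  obtain ⟨G, hG⟩ := hne
  by_cases h : G.Connected
  · exact ⟨G, hG, h⟩
  · obtain ⟨⟨H, r, W⟩, ⟨hAH, hconn⟩, -, -⟩ := encode hba hn hG h
    exact ⟨H, hAH, hconn⟩

end BAProof

/-- If `A` is bridge-addable (and closed under isomorphism) and `Ã_n` is nonempty,
then a uniformly random unlabelled `n`-vertex graph in `A` is connected with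
probability at least `1/(2n)`. -/
theorem prob_connected_ge_one_div_two_n (n : ℕ) (hn : 0 < n)
    (A : SimpleGraph (Fin n) → Prop)
    (hiso : IsoClosed n A) (hba : BridgeAddable n A) (hne : ∃ G, A G) :
    (1 : ℝ) / (2 * n) ≤
      (unlabelledCount n (fun G => A G ∧ G.Connected) : ℝ) / unlabelledCount n A := by
  classical
  have h1 := BAProof.count_split (n := n) A
  have h2 := BAProof.count_D_le (n := n) A hba hn
  set C := unlabelledCount n (fun G => A G ∧ G.Connected) with hC
  set a := unlabelledCount n A with ha
  have key : a ≤ 2 * n * C := by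
    have h3 : a ≤ C + (2 * n - 1) * C := le_trans h1 (by omega)
    have h4 : C + (2 * n - 1) * C = (2 * n - 1 + 1) * C := by ring
    have h5 : 2 * n - 1 + 1 = 2 * n := by omega
    rw [h4, h5] at h3
    exact h3
  have hCpos : 0 < C := by
    have hnonempty : Nonempty (Quotient (graphSetoid n (fun G => A G ∧ G.Connected))) := by
      obtain ⟨G, hG⟩ := BAProof.connected_exists hba hn hne
      exact ⟨Quotient.mk _ ⟨G, hG⟩⟩
    rw [hC, unlabelledCount]
    exact Nat.card_pos
  have hapos : 0 < a := by
    have hnonempty : Nonempty (Quotient (graphSetoid n A)) :=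
      ⟨Quotient.mk _ ⟨hne.choose, hne.choose_spec⟩⟩
    rw [ha, unlabelledCount]
    exact Nat.card_pos
  have h2n : (0 : ℝ) < 2 * n := by positivity
  have haR : (0 : ℝ) < (a : ℝ) := by exact_mod_cast hapos
  rw [div_le_div_iff₀ h2n haR]
  have hkey : (a : ℝ) ≤ 2 * n * C := by exact_mod_cast key
  nlinarith [hkey, haR]
end
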